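/- Let F be a field. For every nonzero element f of the free associative unital F-algebra F⟨X⟩ = FreeAlgebra F ℕ there exist n ≥ 1 and an F-algebra homomorphism φ : F⟨X⟩ → UT_n(F) with φ(f) ≠ 0. Equivalently, the intersection over all n ≥ 1 of the sets of polynomial identities of UT_n(F) is {0}; in particular, the directed union of the algebras UT_n(F) (the path algebra of the infinite equioriented quiver A_∞) is not PI. -/

import Mathlib

/-- The generator matrices: `genM F w j` has a `1` in entry `(p, p+1)` whenever `w[p] = j`. -/
noncomputable def genM (F : Type) [Field F] (w : List ℕ) (j : ℕ) :
    Matrix (Fin (w.length + 1)) (Fin (w.length + 1)) F :=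
  Matrix.of fun p q => if (q : ℕ) = (p : ℕ) + 1 ∧ w[(p : ℕ)]? = some j then 1 else 0

lemma cons_prefix_drop (w u : List ℕ) (a : ℕ) (p : ℕ) :
    (a :: u) <+: w.drop p ↔ w[p]? = some a ∧ u <+: w.drop (p + 1) := by
  rcases lt_or_ge p w.length with hp | hp
  · rw [List.drop_eq_getElem_cons hp, List.cons_prefix_cons, List.getElem?_eq_getElem hp]
    simp [eq_comm]
  · rw [List.drop_eq_nil_of_le hp]
    simp [List.getElem?_eq_none hp, List.prefix_nil]

lemma genM_prod_entry (F : Type) [Field F] (w u : List ℕ) (p q : Fin (w.length + 1)) :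
    ((u.map (genM F w)).prod) p q
      = if (q : ℕ) = (p : ℕ) + u.length ∧ u <+: w.drop (p : ℕ) then 1 else 0 := by
  induction u generalizing p with
  | nil =>
    simp only [List.map_nil, List.prod_nil, Matrix.one_apply, List.length_nil, Nat.add_zero,
      List.nil_prefix, and_true]
    simp [Fin.ext_iff, eq_comm]
  | cons a u ih =>
    rw [List.map_cons, List.prod_cons, Matrix.mul_apply]
    by_cases hC : w[(p : ℕ)]? = some a
    · have hp : (p : ℕ) < w.length := by
        rcases List.getElem?_eq_some_iff.mp hC with ⟨h, -⟩; exact h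
      have hr₀ : ((p : ℕ) + 1) < w.length + 1 := by omega
      rw [Finset.sum_eq_single (⟨(p : ℕ) + 1, hr₀⟩ : Fin (w.length + 1))]
      · have h1 : genM F w a p ⟨(p : ℕ) + 1, hr₀⟩ = 1 := by simp [genM, hC]
        rw [h1, one_mul, ih]
        simp only [cons_prefix_drop]
        simp only [hC, true_and, List.length_cons]
        congr 1
        simp only [eq_iff_iff]
        constructor
        · rintro ⟨h, h'⟩; exact ⟨by omega, h'⟩
        · rintro ⟨h, h'⟩; exact ⟨by omega, h'⟩
      · intro r _ hr
        have : genM F w a p r = 0 := by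
          simp only [genM, Matrix.of_apply, ite_eq_right_iff]
          rintro ⟨h1, -⟩
          exact absurd (Fin.ext h1) hr
        rw [this, zero_mul]
      · intro h; exact absurd (Finset.mem_univ _) h
    · have h0 : ∀ r, genM F w a p r = 0 := by
        intro r; simp [genM, hC]
      simp only [h0, zero_mul, Finset.sum_const_zero]
      rw [eq_comm, ite_eq_right_iff]
      rintro ⟨-, h2⟩
      rw [cons_prefix_drop] at h2
      exact absurd h2.1 hC


structure Quiv where
  V : Type
  A : Type
  [fintV : Fintype V]
  [fintA : Fintype A]
  s : A → V
  t : A → V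

attribute [instance] Quiv.fintV Quiv.fintA

inductive Quiv.IsPathFrom (Q : Quiv) : Q.V → List Q.A → Q.V → Prop
  | nil (v : Q.V) : Q.IsPathFrom v [] v
  | cons {l : List Q.A} {v : Q.V} (a : Q.A) :
      Q.IsPathFrom (Q.t a) l v → Q.IsPathFrom (Q.s a) (a :: l) v

/-- A path in a quiver: a start vertex, a compatible list of arrows, and an end vertex. -/
structure Quiv.QPath (Q : Quiv) where
  src : Q.V
  arrows : List Q.A
  tgt : Q.V
  isPath : Q.IsPathFrom src arrows tgt

theorem Quiv.IsPathFrom.append {Q : Quiv} {u v w : Q.V} {l l' : List Q.A}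
    (h1 : Q.IsPathFrom u l v) : Q.IsPathFrom v l' w → Q.IsPathFrom u (l ++ l') w := by
  induction h1 with
  | nil _ => exact id
  | cons a _ ih => exact fun h2 => .cons a (ih h2)

/-- The lazy path at a vertex. -/
def Quiv.QPath.lazy (Q : Quiv) (v : Q.V) : Q.QPath := ⟨v, [], v, .nil v⟩

/-- Concatenation of composable paths. -/
def Quiv.QPath.comp {Q : Quiv} (p q : Q.QPath) (h : p.tgt = q.src) : Q.QPath :=
  ⟨p.src, p.arrows ++ q.arrows, q.tgt, p.isPath.append (h.symm ▸ q.isPath)⟩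

/-- The length-one path given by a single arrow. -/
def Quiv.QPath.ofArrow (Q : Quiv) (a : Q.A) : Q.QPath :=
  ⟨Q.s a, [a], Q.t a, .cons a (.nil _)⟩

/-- A path algebra of the quiver `Q` over `F`: an `F`-algebra `A` together with a basis
`b` indexed by the paths of `Q`, multiplying by concatenation. -/
structure PathAlgebra (F : Type) [Field F] (Q : Quiv) (A : Type) [Ring A] [Algebra F A] where
  b : Q.QPath → A
  indep : LinearIndependent F b
  spans : Submodule.span F (Set.range b) = ⊤
  mul_comp : ∀ (p q : Q.QPath) (h : p.tgt = q.src), b p * b q = b (p.comp q h)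
  mul_zero : ∀ p q : Q.QPath, p.tgt ≠ q.src → b p * b q = 0
  sum_lazy : ∑ v : Q.V, b (Quiv.QPath.lazy Q v) = 1

/-- `f` is a polynomial identity for the `F`-algebra `A`. -/
def IsPolyId (F : Type) [Field F] (A : Type) [Ring A] [Algebra F A]
    (f : FreeAlgebra F ℕ) : Prop :=
  ∀ φ : FreeAlgebra F ℕ →ₐ[F] A, φ f = 0

/-- `A` is a PI algebra: it has a nonzero polynomial identity. -/
def IsPI (F : Type) [Field F] (A : Type) [Ring A] [Algebra F A] : Prop :=
  ∃ f : FreeAlgebra F ℕ, f ≠ 0 ∧ IsPolyId F A f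

/-- A cycle: a nonempty closed path with pairwise distinct source vertices. -/
def Quiv.QPath.IsCycle {Q : Quiv} (c : Q.QPath) : Prop :=
  c.arrows ≠ [] ∧ c.tgt = c.src ∧ (c.arrows.map Q.s).Nodup

/-- The standard identity `St_N` holds in `A`. -/
def SatisfiesStandardIdentity (A : Type) [Ring A] (N : ℕ) : Prop :=
  ∀ a : Fin N → A,
    ∑ σ : Equiv.Perm (Fin N), (Equiv.Perm.sign σ : ℤ) • (List.ofFn fun i => a (σ i)).prod = 0


/-- The subalgebra of upper triangular `n × n` matrices over `F`. -/
def UT (F : Type) [Field F] (n : ℕ) : Subalgebra F (Matrix (Fin n) (Fin n) F) where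
  carrier := {M | ∀ i j : Fin n, j < i → M i j = 0}
  zero_mem' := fun _ _ _ => rfl
  one_mem' := fun i j hij => Matrix.one_apply_ne' (ne_of_lt hij)
  add_mem' := fun {M N} hM hN i j hij => by
    simp [Matrix.add_apply, hM i j hij, hN i j hij]
  mul_mem' := fun {M N} hM hN i j hij => by
    rw [Matrix.mul_apply]
    apply Finset.sum_eq_zero
    intro k _
    rcases lt_or_ge k i with h | h
    · rw [hM i k h, zero_mul]
    · rw [hN k j (lt_of_lt_of_le hij h), mul_zero]
  algebraMap_mem' := fun c i j hij => by
    rw [Matrix.algebraMap_matrix_apply, if_neg hij.ne']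

/-- Every nonzero element of the free algebra `F⟨X⟩` fails to be a
polynomial identity of `UT_n(F)` for some `n ≥ 1`: the intersection of the T-ideals of
all the `UT_n(F)` is zero, so the path algebra of the infinite equioriented
quiver `A_∞` is not PI. -/
theorem free_algebra_separated_by_upper_triangular (F : Type) [Field F]
    (f : FreeAlgebra F ℕ) (hf : f ≠ 0) :
    ∃ n : ℕ, 1 ≤ n ∧ ∃ φ : FreeAlgebra F ℕ →ₐ[F] (UT F n), φ f ≠ 0 := by
  classical
  set e := (FreeAlgebra.equivMonoidAlgebraFreeMonoid (R := F) (X := ℕ)) with he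
  have hg0 : e f ≠ 0 := fun h => hf (by simpa using e.injective (by simpa using h))
  obtain ⟨w, hw, hmax⟩ := (e f).coeff.support.exists_max_image
    (fun u => (FreeMonoid.toList u).length) (Finsupp.support_nonempty_iff.mpr (by simpa using hg0))
  set wl := FreeMonoid.toList w with hwl
  set d := wl.length with hd
  refine ⟨d + 1, by omega, ?_⟩
  have hmem : ∀ j, genM F wl j ∈ UT F (d + 1) := by
    intro j i k hk
    simp only [genM, Matrix.of_apply]
    rw [if_neg]
    rintro ⟨h1, -⟩
    omega
  set φ : FreeAlgebra F ℕ →ₐ[F] UT F (d + 1) :=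
    FreeAlgebra.lift F (fun j => (⟨genM F wl j, hmem j⟩ : UT F (d + 1))) with hφ
  refine ⟨φ, ?_⟩
  set Ψ : MonoidAlgebra F (FreeMonoid ℕ) →ₐ[F] Matrix (Fin (d + 1)) (Fin (d + 1)) F :=
    MonoidAlgebra.lift F _ (FreeMonoid ℕ) (FreeMonoid.lift (genM F wl)) with hΨ
  have key : (UT F (d + 1)).val.comp φ = Ψ.comp e.toAlgHom := by
    apply FreeAlgebra.hom_ext
    funext j
    simp [hφ, hΨ, he, FreeAlgebra.equivMonoidAlgebraFreeMonoid]
  intro hzero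
  have hΨ0 : Ψ (e f) = 0 := by
    have h := congrArg (fun ψ => ψ f) key
    simp only [AlgHom.comp_apply, hzero, map_zero, AlgEquiv.coe_algHom] at h
    exact h.symm
  have hentry : Ψ (e f) ⟨0, by omega⟩ ⟨d, by omega⟩ = (e f).coeff w := by
    rw [MonoidAlgebra.lift_apply, Finsupp.sum]
    rw [Matrix.sum_apply]
    simp only [Matrix.smul_apply, smul_eq_mul]
    rw [Finset.sum_eq_single w]
    · rw [FreeMonoid.lift_apply, genM_prod_entry]
      simp
      exact fun h => absurd (List.prefix_refl _) (h rfl)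
    · intro u hu hne
      rw [FreeMonoid.lift_apply, genM_prod_entry]
      rw [if_neg, mul_zero]
      rintro ⟨h1, h2⟩
      simp only [List.drop_zero] at h2
      apply hne
      have hlen : (FreeMonoid.toList u).length = wl.length := by
        simp only [Fin.val_mk] at h1
        have := hmax u hu
        omega
      have := h2.eq_of_length hlen
      exact FreeMonoid.toList.injective this
    · intro h; exact absurd hw h
  rw [hΨ0] at hentry
  simp only [Matrix.zero_apply] at hentry
  exact (Finsupp.mem_support_iff.mp hw) hentry.symm
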